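/- Let K be an algebraically closed field with char(K) ≠ 2, g a positive integer, α_1, …, α_{2g+1} pairwise distinct elements of K, and f(x) = ∏_{i=1}^{2g+1}(x − α_i) ∈ K[x]. Let β be one of the α_i, let U(x) ∈ K[x] be a monic polynomial of degree g with U(β) ≠ 0, and let V(x) ∈ K[x] have degree < g, such that U(x) divides f(x) − V(x)^2. Set V_1(x) = V(x) − (V(β)/U(β))·U(x). Then (x − β)·U(x) divides f(x) − V_1(x)^2. -/
import Mathlib


open Polynomial in
/-- Let `K` be algebraically closed with `char K ≠ 2`, `g ≥ 1`,
`α i` pairwise distinct, `f = ∏ (X - C (α i))`, `β` one of the `α i`, `U` monic of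
degree `g` with `U(β) ≠ 0`, `V` of degree `< g` with `U ∣ f - V²`.  Set
`V₁ = V - (V(β)/U(β))·U`.  Then `(X - C β) * U` divides `f - V₁²`. -/
theorem dvd_sub_sq_of_shift
    {K : Type*} [Field K] [IsAlgClosed K] (hK : ringChar K ≠ 2)
    (g : ℕ) (hg : 0 < g) (α : Fin (2 * g + 1) → K) (hα : Function.Injective α)
    (f : K[X]) (hf : f = ∏ i, (X - C (α i)))
    (i₀ : Fin (2 * g + 1)) (β : K) (hβ : β = α i₀)
    (U : K[X]) (hU : U.Monic) (hUdeg : U.natDegree = g) (hUβ : U.eval β ≠ 0)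
    (V : K[X]) (hVdeg : V.degree < (g : WithBot ℕ))
    (hdvd : U ∣ f - V ^ 2)
    (V₁ : K[X]) (hV₁ : V₁ = V - C (V.eval β / U.eval β) * U) :
    (X - C β) * U ∣ f - V₁ ^ 2 := by
  have hcop : IsCoprime (X - C β) U := by
    rw [(Polynomial.irreducible_X_sub_C β).coprime_iff_not_dvd, Polynomial.dvd_iff_isRoot]
    exact hUβ
  apply hcop.mul_dvd
  · rw [Polynomial.dvd_iff_isRoot]
    have h1 : f.eval β = 0 := by
      rw [hf, Polynomial.eval_prod]
      exact Finset.prod_eq_zero (Finset.mem_univ i₀) (by simp [hβ])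
    have h2 : V₁.eval β = 0 := by
      simp [hV₁, div_mul_cancel₀ _ hUβ]
    simp [Polynomial.IsRoot, h1, h2]
  · have : f - V₁ ^ 2 = (f - V ^ 2) + C (V.eval β / U.eval β) * U *
        (V + V₁) := by
      rw [hV₁]; ring
    rw [this]
    exact dvd_add hdvd ⟨C (V.eval β / U.eval β) * (V + V₁), by ring⟩
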